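/- Let H be a permutation group on a set Ω and consider the induced action of H on 2-subsets of Ω. If Λ is an independent set of 2-subsets with respect to this action, then the graph Γ_Λ with vertex set Ω and edge set Λ contains no cycles (is a forest). -/

import Mathlib

open Pointwise

/-- The pointwise stabilizer in `G` of a set `Λ` of points of a `G`-set. -/
def pstab (G : Type*) {α : Type*} [Group G] [MulAction G α] (Λ : Set α) : Subgroup G :=
  ⨅ a ∈ Λ, MulAction.stabilizer G a

lemma mem_pstab_iff {G α : Type*} [Group G] [MulAction G α] {Λ : Set α} {g : G} :
    g ∈ pstab G Λ ↔ ∀ a ∈ Λ, g • a = a := by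
  simp [pstab, Subgroup.mem_iInf, MulAction.mem_stabilizer_iff]

lemma smul_pair {G Ω : Type*} [Group G] [MulAction G Ω] [DecidableEq Ω] (g : G) (a b : Ω) :
    g • ({a, b} : Finset Ω) = {g • a, g • b} := by
  rw [show ({a, b} : Finset Ω) = insert a {b} from rfl, Finset.smul_finset_insert,
    Finset.smul_finset_singleton]

lemma finset_pair_eq {Ω : Type*} [DecidableEq Ω] {a b v w : Ω}
    (h : ({a, b} : Finset Ω) = {v, w}) : a = v ∨ a = w := by
  have : a ∈ ({v, w} : Finset Ω) := h ▸ Finset.mem_insert_self a {b}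
  simpa using this

/-- Lemma 2.4: if `Λ` is an independent set of 2-subsets of `Ω` with respect to the
induced action of a permutation group `H` on 2-subsets, then the graph on `Ω` whose
edges are the members of `Λ` is acyclic (a forest). -/
theorem independent_pairs_graph_isAcyclic {H Ω : Type*} [Group H] [MulAction H Ω]
    [DecidableEq Ω] (Λ : Set (Finset Ω)) (h2 : ∀ s ∈ Λ, s.card = 2)
    (hind : ∀ Δ : Set (Finset Ω), Δ ⊂ Λ → pstab H Δ ≠ pstab H Λ) :
    (SimpleGraph.fromRel (fun x y => ({x, y} : Finset Ω) ∈ Λ)).IsAcyclic := by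
  set G := SimpleGraph.fromRel (fun x y => ({x, y} : Finset Ω) ∈ Λ) with hG
  rw [SimpleGraph.isAcyclic_iff_forall_adj_isBridge]
  intro v w hadj
  by_contra hbr
  rw [SimpleGraph.isBridge_iff] at hbr
  push_neg at hbr
  have hr : (G \ SimpleGraph.fromEdgeSet {s(v, w)}).Reachable v w := hbr
  set G' := G \ SimpleGraph.fromEdgeSet {s(v, w)} with hG'
  have hvw : v ≠ w := hadj.ne
  have he : ({v, w} : Finset Ω) ∈ Λ := by
    rw [hG, SimpleGraph.fromRel_adj] at hadj
    rcases hadj.2 with h | h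
    · exact h
    · rwa [Finset.pair_comm] at h
  -- edges of G' are in Λ and distinct from {v, w}
  have edgeΛ : ∀ a b : Ω, G'.Adj a b →
      ({a, b} : Finset Ω) ∈ Λ ∧ ({a, b} : Finset Ω) ≠ {v, w} := by
    intro a b hab
    rw [hG', SimpleGraph.sdiff_adj, SimpleGraph.fromEdgeSet_adj] at hab
    obtain ⟨hGab, hne⟩ := hab
    rw [hG, SimpleGraph.fromRel_adj] at hGab
    obtain ⟨hab', hmem | hmem⟩ := hGab
    all_goals refine ⟨?_, ?_⟩
    · exact hmem
    · intro hfeq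
      apply hne
      refine ⟨?_, hab'⟩
      simp only [Set.mem_singleton_iff, Sym2.eq_iff]
      rcases finset_pair_eq hfeq with h1 | h1
      · left
        refine ⟨h1, ?_⟩
        have : b ∈ ({v, w} : Finset Ω) := hfeq ▸ (by simp)
        simp only [Finset.mem_insert, Finset.mem_singleton] at this
        rcases this with h3 | h3
        · exact absurd (h1.trans h3.symm) hab'
        · exact h3
      · right
        refine ⟨h1, ?_⟩
        have : b ∈ ({v, w} : Finset Ω) := hfeq ▸ (by simp)
        simp only [Finset.mem_insert, Finset.mem_singleton] at this
        rcases this with h3 | h3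
        · exact h3
        · exact absurd (h1.trans h3.symm) hab'
    · rwa [Finset.pair_comm] at hmem
    · intro hfeq
      apply hne
      refine ⟨?_, hab'⟩
      simp only [Set.mem_singleton_iff, Sym2.eq_iff]
      rcases finset_pair_eq hfeq with h1 | h1
      · left
        refine ⟨h1, ?_⟩
        have : b ∈ ({v, w} : Finset Ω) := hfeq ▸ (by simp)
        simp only [Finset.mem_insert, Finset.mem_singleton] at this
        rcases this with h3 | h3
        · exact absurd (h1.trans h3.symm) hab'
        · exact h3
      · right
        refine ⟨h1, ?_⟩
        have : b ∈ ({v, w} : Finset Ω) := hfeq ▸ (by simp)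
        simp only [Finset.mem_insert, Finset.mem_singleton] at this
        rcases this with h3 | h3
        · exact h3
        · exact absurd (h1.trans h3.symm) hab'
  -- the proper subset
  apply hind (Λ \ {({v, w} : Finset Ω)}) (Set.sdiff_singleton_ssubset.mpr he)
  apply le_antisymm
  · intro h hh
    have hfix : ∀ s ∈ Λ, s ≠ ({v, w} : Finset Ω) → h • s = s := by
      intro s hs hne
      exact mem_pstab_iff.mp hh s ⟨hs, hne⟩
    rw [mem_pstab_iff]
    intro s hs
    by_cases hse : s = ({v, w} : Finset Ω)
    · subst hse
      -- key step: h fixes an edge pointwise once one endpoint is fixed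
      have step : ∀ a b : Ω, a ≠ b → h • ({a, b} : Finset Ω) = {a, b} →
          h • a = a → h • b = b := by
        intro a b hab hfe ha
        have hmem : h • b ∈ ({a, b} : Finset Ω) := by
          rw [← hfe, smul_pair]
          simp
        simp only [Finset.mem_insert, Finset.mem_singleton] at hmem
        rcases hmem with hm | hm
        · have hba : h • b = h • a := by rw [hm, ha]
          exact absurd (MulAction.injective h hba) hab.symm
        · exact hm
      have walkfix : ∀ {x y : Ω} (p : G'.Walk x y), h • x = x → h • y = y := by
        intro x y p
        induction p with
        | nil => exact id
        | @cons x' u' y' ha q ih =>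
          intro hx
          obtain ⟨hmem, hne⟩ := edgeΛ x' u' ha
          exact ih (step x' u' ha.ne (hfix _ hmem hne) hx)
      obtain ⟨p0⟩ := hr
      obtain ⟨p, hp⟩ := p0.toPath
      cases p with
      | nil => exact absurd rfl hvw
      | @cons _ u _ ha q =>
        obtain ⟨hmem1, hne1⟩ := edgeΛ v u ha
        have hfe1 : h • ({v, u} : Finset Ω) = {v, u} := hfix _ hmem1 hne1
        have hvmem : h • v ∈ ({v, u} : Finset Ω) := by
          rw [← hfe1, smul_pair]; simp
        simp only [Finset.mem_insert, Finset.mem_singleton] at hvmem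
        rcases hvmem with hv | hv
        · -- h fixes v, hence by walking it fixes w
          have hw : h • w = w := walkfix (SimpleGraph.Walk.cons ha q) hv
          rw [smul_pair, hv, hw]
        · -- h swaps v and u
          have hu : h • u = v := by
            have hmem : h • u ∈ ({v, u} : Finset Ω) := by
              rw [← hfe1, smul_pair]; simp
            simp only [Finset.mem_insert, Finset.mem_singleton] at hmem
            rcases hmem with hm | hm
            · exact hm
            · exact absurd (MulAction.injective h (hv.trans hm.symm)) ha.ne
          cases q with
          | nil =>
            rw [smul_pair, hv, hu, Finset.pair_comm]
          | @cons _ u' _ hb r =>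
            obtain ⟨hmem2, hne2⟩ := edgeΛ u u' hb
            have hfe2 : h • ({u, u'} : Finset Ω) = {u, u'} := hfix _ hmem2 hne2
            have humem : h • u ∈ ({u, u'} : Finset Ω) := by
              rw [← hfe2, smul_pair]; simp
            rw [hu] at humem
            simp only [Finset.mem_insert, Finset.mem_singleton] at humem
            rcases humem with hm | hm
            · exact absurd hm ha.ne
            · -- v = u', contradicting that p is a path
              exfalso
              rw [SimpleGraph.Walk.cons_isPath_iff] at hp
              apply hp.2
              rw [SimpleGraph.Walk.support_cons]
              right
              rw [hm]
              exact r.start_mem_support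
    · exact hfix s hs hse
  · exact biInf_mono fun s hs => hs.1
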